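/- Let B ∈ SL(3,ℝ) with B ≠ I stabilize each of three pairwise transverse flags (V₀,W₀), (V₁,W₁), (V₂,W₂) in ℝ³. Then there is a 2-dimensional subspace W of ℝ³ containing V₀, V₁ and V₂, there is a 1-dimensional subspace V of ℝ³ contained in W₀ ∩ W₁ ∩ W₂, and B is conjugate in GL(3,ℝ) to diag(λ, λ⁻², λ) for some real λ with λ ≠ 0 and λ ≠ 1. -/

import Mathlib

open Matrix Submodule


lemma aux_rank_one {V : Submodule ℝ (Fin 3 → ℝ)} (h : Module.finrank ℝ V = 1) :
    ∃ v : Fin 3 → ℝ, v ≠ 0 ∧ V = Submodule.span ℝ {v} := by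
  obtain ⟨v, hv0, hall⟩ := finrank_eq_one_iff'.1 h
  refine ⟨(v : Fin 3 → ℝ), by simpa using hv0, le_antisymm ?_ ?_⟩
  · intro x hx
    obtain ⟨c, hc⟩ := hall ⟨x, hx⟩
    exact Submodule.mem_span_singleton.2 ⟨c, by simpa using congrArg Subtype.val hc⟩
  · rw [Submodule.span_le, Set.singleton_subset_iff]; exact v.2


/-- A flag in `ℝ³`: a line contained in a plane. -/
def IsFlag (V W : Submodule ℝ (Fin 3 → ℝ)) : Prop :=
  Module.finrank ℝ V = 1 ∧ Module.finrank ℝ W = 2 ∧ V ≤ W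

/-- Two flags `(V,W)` and `(V',W')` are transverse if `V ⊄ W'` and `V' ⊄ W`. -/
def TransverseFlags (V W V' W' : Submodule ℝ (Fin 3 → ℝ)) : Prop :=
  ¬ V ≤ W' ∧ ¬ V' ≤ W

/-- A matrix `M` stabilizes the flag `(V, W)` if it maps `V` onto `V`
and `W` onto `W`. -/
def StabilizesFlag (M : Matrix (Fin 3) (Fin 3) ℝ)
    (V W : Submodule ℝ (Fin 3 → ℝ)) : Prop :=
  Submodule.map M.mulVecLin V = V ∧ Submodule.map M.mulVecLin W = W

/-- let `B ∈ SL(3,ℝ)`, `B ≠ I`, stabilize three pairwise transverse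
flags `(V₀,W₀)`, `(V₁,W₁)`, `(V₂,W₂)`. Then there is a plane `W` containing
`V₀, V₁, V₂`, a line `V` contained in `W₀ ∩ W₁ ∩ W₂`, and `B` is conjugate in
`GL(3,ℝ)` to `diag(λ, λ⁻², λ)` for some `λ ∉ {0, 1}`. -/
theorem stmt11 (B : Matrix.SpecialLinearGroup (Fin 3) ℝ) (hB : B ≠ 1)
    (V₀ W₀ V₁ W₁ V₂ W₂ : Submodule ℝ (Fin 3 → ℝ))
    (hF0 : IsFlag V₀ W₀) (hF1 : IsFlag V₁ W₁) (hF2 : IsFlag V₂ W₂)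
    (h01 : TransverseFlags V₀ W₀ V₁ W₁)
    (h02 : TransverseFlags V₀ W₀ V₂ W₂)
    (h12 : TransverseFlags V₁ W₁ V₂ W₂)
    (hs0 : StabilizesFlag B.1 V₀ W₀)
    (hs1 : StabilizesFlag B.1 V₁ W₁)
    (hs2 : StabilizesFlag B.1 V₂ W₂) :
    (∃ W : Submodule ℝ (Fin 3 → ℝ), Module.finrank ℝ W = 2 ∧
      V₀ ≤ W ∧ V₁ ≤ W ∧ V₂ ≤ W) ∧
    (∃ V : Submodule ℝ (Fin 3 → ℝ), Module.finrank ℝ V = 1 ∧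
      V ≤ W₀ ⊓ W₁ ⊓ W₂) ∧
    (∃ g : GL (Fin 3) ℝ, ∃ l : ℝ, l ≠ 0 ∧ l ≠ 1 ∧
      (g : Matrix (Fin 3) (Fin 3) ℝ) * B.1 * ((g⁻¹ : GL (Fin 3) ℝ) : Matrix (Fin 3) (Fin 3) ℝ)
        = Matrix.diagonal ![l, (l ^ 2)⁻¹, l]) := by
  obtain ⟨hV0r, hW0r, hVW0⟩ := hF0
  obtain ⟨hV1r, hW1r, hVW1⟩ := hF1
  obtain ⟨hV2r, hW2r, hVW2⟩ := hF2
  obtain ⟨h01a, h01b⟩ := h01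
  obtain ⟨h02a, h02b⟩ := h02
  obtain ⟨h12a, h12b⟩ := h12
  obtain ⟨hsV0, hsW0⟩ := hs0
  obtain ⟨hsV1, hsW1⟩ := hs1
  obtain ⟨hsV2, hsW2⟩ := hs2
  set f := B.1.mulVecLin with hfdef
  obtain ⟨v₀, hv₀0, hV0⟩ := aux_rank_one hV0r
  obtain ⟨v₁, hv₁0, hV1⟩ := aux_rank_one hV1r
  obtain ⟨v₂, hv₂0, hV2⟩ := aux_rank_one hV2r
  have hv₀V : v₀ ∈ V₀ := hV0 ▸ Submodule.mem_span_singleton_self v₀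
  have hv₁V : v₁ ∈ V₁ := hV1 ▸ Submodule.mem_span_singleton_self v₁
  have hv₂V : v₂ ∈ V₂ := hV2 ▸ Submodule.mem_span_singleton_self v₂
  have hv₀W₀ : v₀ ∈ W₀ := hVW0 hv₀V
  have hv₁W₁ : v₁ ∈ W₁ := hVW1 hv₁V
  -- eigenvalues on the lines
  have heig : ∀ (V : Submodule ℝ (Fin 3 → ℝ)) (v : Fin 3 → ℝ), V = span ℝ {v} →
      Submodule.map f V = V → ∃ l : ℝ, f v = l • v := by
    intro V v hV hmap
    have hfv : f v ∈ V := hmap ▸ Submodule.mem_map_of_mem (hV ▸ Submodule.mem_span_singleton_self v)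
    rw [hV, Submodule.mem_span_singleton] at hfv
    obtain ⟨c, hc⟩ := hfv
    exact ⟨c, hc.symm⟩
  obtain ⟨l₀, he₀⟩ := heig V₀ v₀ hV0 hsV0
  obtain ⟨l₁, he₁⟩ := heig V₁ v₁ hV1 hsV1
  obtain ⟨l₂, he₂⟩ := heig V₂ v₂ hV2 hsV2
  -- the intersection line
  have hW01ne : W₀ ≠ W₁ := fun h => h01a (h ▸ hVW0)
  have hr_inf : Module.finrank ℝ ↥(W₀ ⊓ W₁) = 1 := by
    have h1 := Submodule.finrank_sup_add_finrank_inf_eq W₀ W₁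
    have h2 : Module.finrank ℝ ↥(W₀ ⊔ W₁) ≤ 3 := by
      simpa using Submodule.finrank_le (W₀ ⊔ W₁)
    have h3 : Module.finrank ℝ ↥(W₀ ⊓ W₁) ≤ 2 := hW0r ▸ Submodule.finrank_mono inf_le_left
    have h4 : Module.finrank ℝ ↥(W₀ ⊓ W₁) ≠ 2 := by
      intro h
      have e0 : W₀ ⊓ W₁ = W₀ :=
        Submodule.eq_of_le_of_finrank_eq inf_le_left (h.trans hW0r.symm)
      have e1 : W₀ ⊓ W₁ = W₁ :=
        Submodule.eq_of_le_of_finrank_eq inf_le_right (h.trans hW1r.symm)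
      exact hW01ne (e0.symm.trans e1)
    rw [hW0r, hW1r] at h1
    omega
  obtain ⟨u, hu0, hinf⟩ := aux_rank_one hr_inf
  have huI : u ∈ W₀ ⊓ W₁ := hinf ▸ Submodule.mem_span_singleton_self u
  have huW₀ : u ∈ W₀ := huI.1
  have huW₁ : u ∈ W₁ := huI.2
  have hμex : ∃ μ : ℝ, f u = μ • u := by
    have hmap : Submodule.map f (W₀ ⊓ W₁) ≤ W₀ ⊓ W₁ := by
      refine le_inf ?_ ?_
      · exact le_trans (Submodule.map_mono inf_le_left) hsW0.le
      · exact le_trans (Submodule.map_mono inf_le_right) hsW1.le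
    have hfu : f u ∈ W₀ ⊓ W₁ := hmap (Submodule.mem_map_of_mem huI)
    rw [hinf, Submodule.mem_span_singleton] at hfu
    obtain ⟨c, hc⟩ := hfu
    exact ⟨c, hc.symm⟩
  obtain ⟨μ, heu⟩ := hμex
  -- non-memberships
  have hv₁nW₀ : v₁ ∉ W₀ := fun h =>
    h01b (hV1 ▸ (Submodule.span_le.2 (Set.singleton_subset_iff.2 h)))
  have hv₀nW₁ : v₀ ∉ W₁ := fun h =>
    h01a (hV0 ▸ (Submodule.span_le.2 (Set.singleton_subset_iff.2 h)))
  -- linear independence of v₀ u v₁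
  have hli : LinearIndependent ℝ ![v₀, u, v₁] := by
    rw [show (![v₀, u, v₁] : Fin 3 → Fin 3 → ℝ) = Fin.cons v₀ ![u, v₁] by
      ext i j; fin_cases i <;> rfl]
    rw [linearIndependent_fin_cons]
    constructor
    · rw [show (![u, v₁] : Fin 2 → Fin 3 → ℝ) = Fin.cons u ![v₁] by
        ext i j; fin_cases i <;> rfl]
      rw [linearIndependent_fin_cons]
      constructor
      · exact LinearIndependent.of_subsingleton (v := ![v₁]) 0 (by simpa using hv₁0)
      · intro hmem
        rw [show Set.range ![v₁] = {v₁} by simp, Submodule.mem_span_singleton] at hmem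
        obtain ⟨t, ht⟩ := hmem
        have ht0 : t ≠ 0 := by rintro rfl; simp at ht; exact hu0 ht.symm
        have : v₁ ∈ W₀ := by
          have : v₁ = t⁻¹ • u := by rw [← ht, smul_smul, inv_mul_cancel₀ ht0, one_smul]
          rw [this]; exact Submodule.smul_mem _ _ huW₀
        exact hv₁nW₀ this
    · intro hmem
      rw [show Set.range ![u, v₁] = {u, v₁} by simp [Set.pair_comm], Submodule.mem_span_pair] at hmem
      obtain ⟨s, t, hst⟩ := hmem
      by_cases ht : t = 0
      · subst ht
        have : v₀ ∈ W₁ := by rw [← hst]; simpa using Submodule.smul_mem _ s huW₁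
        exact hv₀nW₁ this
      · have : v₁ ∈ W₀ := by
          have h1 : t • v₁ = v₀ - s • u := by rw [← hst]; abel
          have hv : v₁ = t⁻¹ • (v₀ - s • u) := by
            rw [← h1, smul_smul, inv_mul_cancel₀ ht, one_smul]
          rw [hv]
          exact Submodule.smul_mem _ _ (Submodule.sub_mem _ hv₀W₀ (Submodule.smul_mem _ _ huW₀))
        exact hv₁nW₀ this
  -- basis
  have hcard : Fintype.card (Fin 3) = Module.finrank ℝ (Fin 3 → ℝ) := by simp
  let b := basisOfLinearIndependentOfCardEqFinrank hli hcard
  have hb : ⇑b = ![v₀, u, v₁] := coe_basisOfLinearIndependentOfCardEqFinrank hli hcard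
  have hdec : ∀ w : Fin 3 → ℝ, ∃ x y z : ℝ, w = x • v₀ + y • u + z • v₁ := by
    intro w
    refine ⟨b.repr w 0, b.repr w 1, b.repr w 2, ?_⟩
    have h := b.sum_repr w
    rw [Fin.sum_univ_three] at h
    conv_lhs => rw [← h]
    rw [hb]
    simp
  have hzero : ∀ x y z : ℝ, x • v₀ + y • u + z • v₁ = 0 → x = 0 ∧ y = 0 ∧ z = 0 := by
    intro x y z h
    have h2 := Fintype.linearIndependent_iff.1 hli ![x, y, z]
    rw [Fin.sum_univ_three] at h2
    simp only [Matrix.cons_val_zero, Matrix.cons_val_one, Matrix.head_cons,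
      Matrix.cons_val_two, Matrix.tail_cons] at h2
    have h3 := h2 h
    exact ⟨h3 0, h3 1, h3 2⟩
  have huniq : ∀ x y z x' y' z' : ℝ, x • v₀ + y • u + z • v₁ = x' • v₀ + y' • u + z' • v₁ →
      x = x' ∧ y = y' ∧ z = z' := by
    intro x y z x' y' z' h
    have h0 : (x - x') • v₀ + (y - y') • u + (z - z') • v₁ = 0 := by
      rw [sub_smul, sub_smul, sub_smul]
      rw [sub_add_sub_comm, sub_add_sub_comm, sub_eq_zero]
      exact h
    obtain ⟨e1, e2, e3⟩ := hzero _ _ _ h0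
    exact ⟨sub_eq_zero.1 e1, sub_eq_zero.1 e2, sub_eq_zero.1 e3⟩
  have hfcomb : ∀ x y z : ℝ, f (x • v₀ + y • u + z • v₁)
      = (x * l₀) • v₀ + (y * μ) • u + (z * l₁) • v₁ := by
    intro x y z
    rw [map_add, map_add, LinearMap.map_smul, LinearMap.map_smul, LinearMap.map_smul, he₀, heu, he₁,
      smul_smul, smul_smul, smul_smul]
  -- decompose v₂
  obtain ⟨a, e, c, hv₂⟩ := hdec v₂
  have hcoef : a * l₀ = l₂ * a ∧ e * μ = l₂ * e ∧ c * l₁ = l₂ * c := by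
    have h1 : f v₂ = (l₂ * a) • v₀ + (l₂ * e) • u + (l₂ * c) • v₁ := by
      rw [he₂, hv₂, smul_add, smul_add, smul_smul, smul_smul, smul_smul]
    rw [hv₂, hfcomb] at h1
    exact huniq _ _ _ _ _ _ h1
  have hc0 : c ≠ 0 := by
    intro hc
    apply h02b
    rw [hV2, Submodule.span_le, Set.singleton_subset_iff]
    rw [hv₂, hc, zero_smul, add_zero]
    exact Submodule.add_mem _ (Submodule.smul_mem _ _ hv₀W₀) (Submodule.smul_mem _ _ huW₀)
  have ha0 : a ≠ 0 := by
    intro hc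
    apply h12b
    rw [hV2, Submodule.span_le, Set.singleton_subset_iff]
    rw [hv₂, hc, zero_smul, zero_add]
    exact Submodule.add_mem _ (Submodule.smul_mem _ _ huW₁) (Submodule.smul_mem _ _ hv₁W₁)
  have hl20 : l₂ = l₀ := by
    have h : (l₂ - l₀) * a = 0 := by linear_combination -hcoef.1
    rcases mul_eq_zero.1 h with h | h
    · exact sub_eq_zero.1 h
    · exact absurd h ha0
  have hl21 : l₂ = l₁ := by
    have h : (l₂ - l₁) * c = 0 := by linear_combination -hcoef.2.2
    rcases mul_eq_zero.1 h with h | h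
    · exact sub_eq_zero.1 h
    · exact absurd h hc0
  have hl10 : l₁ = l₀ := hl21 ▸ hl20
  -- mu differs from l0
  have hμl : μ ≠ l₀ := by
    intro hμ
    have hfw : ∀ w : Fin 3 → ℝ, f w = l₀ • w := by
      intro w
      obtain ⟨x, y, z, hw⟩ := hdec w
      rw [hw, hfcomb, hμ, hl10, smul_add, smul_add, smul_smul, smul_smul, smul_smul]
      ring_nf
    have hBeq : B.1 = l₀ • (1 : Matrix (Fin 3) (Fin 3) ℝ) := by
      ext i j
      have h := congrFun (hfw (Pi.single j 1)) i
      rw [hfdef] at h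
      simp only [Matrix.mulVecLin_apply, Matrix.mulVec_single, mul_one, MulOpposite.op_one, one_smul, Matrix.col_apply] at h
      simp only [Matrix.smul_apply, Matrix.one_apply, smul_eq_mul]
      rw [h]
      by_cases hij : i = j <;> simp [hij, Pi.single_apply, Matrix.one_apply] <;> norm_num
    have hdet : (l₀ • (1 : Matrix (Fin 3) (Fin 3) ℝ)).det = 1 := by
      rw [← hBeq]; exact B.2
    rw [Matrix.det_smul, Matrix.det_one] at hdet
    simp only [Fintype.card_fin, mul_one] at hdet
    have hl01 : l₀ = 1 := by
      have h1 : (l₀ - 1) * (l₀ ^ 2 + l₀ + 1) = 0 := by linear_combination hdet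
      have h2 : l₀ ^ 2 + l₀ + 1 ≠ 0 := by
        intro hz
        have h3 : (2 * l₀ + 1) ^ 2 = -3 := by linear_combination 4 * hz
        have hge := sq_nonneg (2 * l₀ + 1)
        rw [h3] at hge
        norm_num at hge
      rcases mul_eq_zero.1 h1 with h | h
      · exact sub_eq_zero.1 h
      · exact absurd h h2
    apply hB
    apply Subtype.ext
    rw [hBeq, hl01, one_smul]
    simp
  have he0 : e = 0 := by
    have h : e * (μ - l₀) = 0 := by linear_combination hcoef.2.1 + e * hl20
    rcases mul_eq_zero.1 h with h | h
    · exact h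
    · exact absurd (sub_eq_zero.1 h) hμl
  -- the plane spanned by v0 v1
  have hli02 : LinearIndependent ℝ ![v₀, v₁] := by
    have h := hli.comp ![0, 2] (by decide)
    have heq : (![v₀, u, v₁] ∘ ![0, 2] : Fin 2 → Fin 3 → ℝ) = ![v₀, v₁] := by
      ext i j; fin_cases i <;> rfl
    rwa [heq] at h
  have hWr : Module.finrank ℝ ↥(span ℝ ({v₀, v₁} : Set (Fin 3 → ℝ))) = 2 := by
    have h := finrank_span_eq_card hli02
    rw [show Set.range ![v₀, v₁] = {v₀, v₁} by simp [Set.pair_comm]] at h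
    simpa using h
  -- u in W2
  have huW₂ : u ∈ W₂ := by
    by_contra hu
    have hW₂le : W₂ ≤ span ℝ {v₀, v₁} := by
      intro w hw
      obtain ⟨x, y, z, hw'⟩ := hdec w
      have hfwW : f w ∈ W₂ := hsW2 ▸ Submodule.mem_map_of_mem hw
      have hsub : f w - l₀ • w = (y * (μ - l₀)) • u := by
        rw [hw', hfcomb, hl10]
        module
      have hmem : (y * (μ - l₀)) • u ∈ W₂ :=
        hsub ▸ Submodule.sub_mem _ hfwW (Submodule.smul_mem _ _ hw)
      have hy : y = 0 := by
        by_contra hy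
        have hne : y * (μ - l₀) ≠ 0 := mul_ne_zero hy (sub_ne_zero.2 hμl)
        apply hu
        have h2 := Submodule.smul_mem W₂ (y * (μ - l₀))⁻¹ hmem
        rwa [smul_smul, inv_mul_cancel₀ hne, one_smul] at h2
      rw [hw', hy, zero_smul, add_zero]
      exact Submodule.mem_span_pair.2 ⟨x, z, rfl⟩
    have hW₂eq : W₂ = span ℝ {v₀, v₁} :=
      Submodule.eq_of_le_of_finrank_eq hW₂le (by rw [hW2r, hWr])
    apply h02a
    rw [hV0, hW₂eq]
    exact Submodule.span_mono (by simp)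
  -- matrix conjugation
  let P : Matrix (Fin 3) (Fin 3) ℝ := (Pi.basisFun ℝ (Fin 3)).toMatrix ⇑b
  haveI hPinv : Invertible P := (Pi.basisFun ℝ (Fin 3)).invertibleToMatrix b
  have hPentry : ∀ i j, P i j = ![v₀, u, v₁] j i := by
    intro i j
    show (Pi.basisFun ℝ (Fin 3)).toMatrix (⇑b) i j = _
    rw [Module.Basis.toMatrix_apply, Pi.basisFun_repr, hb]
  have hD : B.1 * P = P * Matrix.diagonal ![l₀, μ, l₀] := by
    ext i j
    have h1 : f (![v₀, u, v₁] j) = (![l₀, μ, l₀] j) • (![v₀, u, v₁] j) := by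
      fin_cases j
      · simpa using he₀
      · simpa using heu
      · simpa [hl10] using he₁
    have h2 := congrFun h1 i
    rw [hfdef] at h2
    rw [Matrix.mul_apply, Matrix.mul_diagonal]
    calc ∑ k, B.1 i k * P k j
        = (B.1.mulVecLin (![v₀, u, v₁] j)) i := by
          simp only [Matrix.mulVecLin_apply, Matrix.mulVec, dotProduct]
          exact Finset.sum_congr rfl fun k _ => by rw [hPentry]
      _ = (![l₀, μ, l₀] j) • (![v₀, u, v₁] j) i := by rw [h2]; rfl
      _ = P i j * ![l₀, μ, l₀] j := by
          rw [hPentry, smul_eq_mul, mul_comm]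
  have hdetP : P.det ≠ 0 := (Matrix.isUnit_det_of_invertible P).ne_zero
  have hdetD : l₀ * μ * l₀ = 1 := by
    have h := congrArg Matrix.det hD
    rw [Matrix.det_mul, Matrix.det_mul, B.2, one_mul, Matrix.det_diagonal] at h
    rw [Fin.prod_univ_three] at h
    simp only [Matrix.cons_val_zero, Matrix.cons_val_one, Matrix.head_cons,
      Matrix.cons_val_two, Matrix.tail_cons] at h
    exact mul_left_cancel₀ hdetP (h.symm.trans (mul_one P.det).symm)
  have hl0 : l₀ ≠ 0 := by
    intro h; rw [h] at hdetD; simp at hdetD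
  have hμval : μ = (l₀ ^ 2)⁻¹ := by
    field_simp
    linear_combination hdetD
  have hl1ne : l₀ ≠ 1 := by
    intro h
    apply hμl
    rw [hμval, h]
    norm_num
  refine ⟨⟨span ℝ {v₀, v₁}, hWr, ?_, ?_, ?_⟩,
    ⟨span ℝ {u}, finrank_span_singleton hu0, ?_⟩,
    ⟨(unitOfInvertible P)⁻¹, l₀, hl0, hl1ne, ?_⟩⟩
  · rw [hV0]; exact Submodule.span_mono (by simp)
  · rw [hV1]; exact Submodule.span_mono (by simp)
  · rw [hV2, Submodule.span_le, Set.singleton_subset_iff]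
    refine Submodule.mem_span_pair.2 ⟨a, c, ?_⟩
    rw [hv₂, he0, zero_smul, add_zero]
  · refine le_inf (le_inf ?_ ?_) ?_ <;>
      rw [Submodule.span_le, Set.singleton_subset_iff]
    · exact huW₀
    · exact huW₁
    · exact huW₂
  · have hg1 : (((unitOfInvertible P)⁻¹ : GL (Fin 3) ℝ) : Matrix (Fin 3) (Fin 3) ℝ) = ⅟P := rfl
    have hg2 : ((((unitOfInvertible P)⁻¹)⁻¹ : GL (Fin 3) ℝ) : Matrix (Fin 3) (Fin 3) ℝ) = P := by
      rw [inv_inv]; rfl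
    rw [hg1, hg2, ← hμval, mul_assoc, hD, ← mul_assoc, invOf_mul_self, one_mul]
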